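/- For a CIR U over schema {A, ?B}, a sample r is a most probable consistent sample with respect to the FD A → B if and only if, for every value a in the active domain of A, the common B-value b_a chosen by r for the tuples with A-value a maximizes p(a, b) = ∏_{i : U[i][A]=a} Pr_{U[i][?B]}(b). Consequently, a sample r that for each a independently picks a maximizer b_a of p(a,·) is a most probable database. -/
import Mathlib

open Finset

/-- For a CIR over `{A, ?B}` (with at least one positive-probability consistent
sample), a consistent sample `r` (one satisfying `A → B`) is a most probable database iff for
every value `a` in the active domain of `A`, the common `B`-value chosen by `r` on the tuples
with `A`-value `a` maximizes `p(a,b) = ∏_{i : Aval i = a} p i b`.  Consequently, any sample that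
independently picks, for each `a`, a maximizer `b_a` of `p(a,·)` is a most probable database. -/
theorem stmt1 {ι V : Type} [Fintype ι] [Fintype V] [DecidableEq ι] [DecidableEq V]
    (Aval : ι → V) (p : ι → V → ℝ)
    (hnn : ∀ i b, 0 ≤ p i b)
    (hex : ∃ r : ι → V, (∀ i j : ι, Aval i = Aval j → r i = r j) ∧ 0 < ∏ i : ι, p i (r i)) :
    (∀ r : ι → V, (∀ i j : ι, Aval i = Aval j → r i = r j) →
      ((∀ r' : ι → V, (∀ i j : ι, Aval i = Aval j → r' i = r' j) →
          ∏ i : ι, p i (r' i) ≤ ∏ i : ι, p i (r i))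
        ↔ ∀ i : ι, ∀ b : V,
            ∏ j ∈ Finset.univ.filter (fun j => Aval j = Aval i), p j b
              ≤ ∏ j ∈ Finset.univ.filter (fun j => Aval j = Aval i), p j (r i)))
    ∧ (∀ g : V → V,
        (∀ a ∈ Finset.univ.image Aval, ∀ b : V,
            ∏ j ∈ Finset.univ.filter (fun j => Aval j = a), p j b
              ≤ ∏ j ∈ Finset.univ.filter (fun j => Aval j = a), p j (g a)) →
        ((∀ i j : ι, Aval i = Aval j → g (Aval i) = g (Aval j))
          ∧ ∀ r' : ι → V, (∀ i j : ι, Aval i = Aval j → r' i = r' j) →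
              ∏ i : ι, p i (r' i) ≤ ∏ i : ι, p i (g (Aval i)))) := by
  classical
  have fib : ∀ r : ι → V,
      (∏ a ∈ Finset.univ.image Aval, ∏ j ∈ Finset.univ.filter (fun j => Aval j = a), p j (r j))
        = ∏ i : ι, p i (r i) := fun r =>
    Finset.prod_fiberwise_of_maps_to (fun i _ => Finset.mem_image_of_mem _ (mem_univ i)) _
  have fibconst : ∀ (r : ι → V), (∀ i j, Aval i = Aval j → r i = r j) → ∀ i : ι,
      (∏ j ∈ Finset.univ.filter (fun j => Aval j = Aval i), p j (r j))
        = ∏ j ∈ Finset.univ.filter (fun j => Aval j = Aval i), p j (r i) := by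
    intro r hr i
    refine Finset.prod_congr rfl ?_
    intro j hj
    rw [hr j i (by simpa using hj)]
  have backward : ∀ r : ι → V, (∀ i j, Aval i = Aval j → r i = r j) →
      (∀ i : ι, ∀ b : V, ∏ j ∈ Finset.univ.filter (fun j => Aval j = Aval i), p j b
          ≤ ∏ j ∈ Finset.univ.filter (fun j => Aval j = Aval i), p j (r i)) →
      ∀ r' : ι → V, (∀ i j, Aval i = Aval j → r' i = r' j) →
        ∏ i : ι, p i (r' i) ≤ ∏ i : ι, p i (r i) := by
    intro r hr hmax r' hr'
    rw [← fib r, ← fib r']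
    apply Finset.prod_le_prod
    · intro a _; exact Finset.prod_nonneg (fun j _ => hnn _ _)
    · intro a ha
      obtain ⟨i, _, rfl⟩ := Finset.mem_image.mp ha
      rw [fibconst r hr i, fibconst r' hr' i]
      exact hmax i (r' i)
  constructor
  · intro r hr
    constructor
    · intro hopt i b
      obtain ⟨r0, hr0c, hr0p⟩ := hex
      have hrpos : 0 < ∏ i : ι, p i (r i) := lt_of_lt_of_le hr0p (hopt r0 hr0c)
      set r' : ι → V := fun j => if Aval j = Aval i then b else r j with hr'def
      have hr'c : ∀ x y : ι, Aval x = Aval y → r' x = r' y := by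
        intro x y hxy
        simp only [hr'def, hxy]
        split
        · rfl
        · exact hr x y hxy
      have key := hopt r' hr'c
      have hmem : Aval i ∈ Finset.univ.image Aval :=
        Finset.mem_image_of_mem _ (mem_univ i)
      -- decompose both products over the fiber at `Aval i` and the rest
      set R : ℝ := ∏ a ∈ (Finset.univ.image Aval).erase (Aval i),
        ∏ j ∈ Finset.univ.filter (fun j => Aval j = a), p j (r j) with hR
      have hsplit_r : (∏ k : ι, p k (r k))
          = (∏ j ∈ Finset.univ.filter (fun j => Aval j = Aval i), p j (r i)) * R := by
        rw [← fib r, ← Finset.mul_prod_erase _ _ hmem, fibconst r hr i]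
      have hR'eq : (∏ a ∈ (Finset.univ.image Aval).erase (Aval i),
          ∏ j ∈ Finset.univ.filter (fun j => Aval j = a), p j (r' j)) = R := by
        refine Finset.prod_congr rfl ?_
        intro a ha
        refine Finset.prod_congr rfl ?_
        intro j hj
        have hja : Aval j = a := by simpa using hj
        have : Aval j ≠ Aval i := by
          rw [hja]; exact (Finset.mem_erase.mp ha).1
        simp only [hr'def, if_neg this]
      have hsplit_r' : (∏ k : ι, p k (r' k))
          = (∏ j ∈ Finset.univ.filter (fun j => Aval j = Aval i), p j b) * R := by
        rw [← fib r', ← Finset.mul_prod_erase _ _ hmem, hR'eq]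
        congr 1
        refine Finset.prod_congr rfl ?_
        intro j hj
        have hja : Aval j = Aval i := by simpa using hj
        simp only [hr'def, if_pos hja]
      have hRnn : 0 ≤ R :=
        Finset.prod_nonneg fun a _ => Finset.prod_nonneg fun j _ => hnn _ _
      have hRpos : 0 < R := by
        rcases hRnn.lt_or_eq with h | h
        · exact h
        · exfalso
          rw [hsplit_r, ← h, mul_zero] at hrpos
          exact lt_irrefl _ hrpos
      have : (∏ j ∈ Finset.univ.filter (fun j => Aval j = Aval i), p j b) * R
          ≤ (∏ j ∈ Finset.univ.filter (fun j => Aval j = Aval i), p j (r i)) * R := by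
        rw [← hsplit_r, ← hsplit_r']; exact key
      exact le_of_mul_le_mul_right this hRpos
    · exact backward r hr
  · intro g hg
    have hgc : ∀ i j : ι, Aval i = Aval j → g (Aval i) = g (Aval j) := by
      intro i j hij; rw [hij]
    refine ⟨hgc, ?_⟩
    exact backward (fun i => g (Aval i)) hgc
      (fun i b => hg (Aval i) (Finset.mem_image_of_mem _ (mem_univ i)) b)
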